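/- Let m and n be integers with 2 ≤ m < n, and let G be a finite simple graph that is strongly regular with parameters (n², m(n−1), m²−3m+n, m(m−1)) (i.e., G is a Latin square graph LS_m(n) or, more generally, any pseudo Latin square graph with these parameters). Then θ(G) = n and θ(Ḡ) = n, where Ḡ is the complement of G. -/

import Mathlib

open scoped Classical

noncomputable def lovaszTheta {V : Type*} [Fintype V] (G : SimpleGraph V) : ℝ :=
  sSup { x : ℝ | ∃ B : Matrix V V ℝ, B.PosSemidef ∧ B.trace = 1 ∧
    (∀ i j, G.Adj i j → B i j = 0) ∧ x = ∑ i, ∑ j, B i j }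

noncomputable def nbhd {V : Type*} [Fintype V] (G : SimpleGraph V) (v : V) : Finset V :=
  Finset.univ.filter fun w => G.Adj v w

/-- `G` is strongly regular with parameters `(n, d, l, m)`: it has `n` vertices, is
`d`-regular, adjacent vertices have `l` common neighbors, distinct nonadjacent vertices
have `m` common neighbors, and `G` is neither complete nor empty. -/
def IsSRG {V : Type*} [Fintype V] (G : SimpleGraph V) (n d l m : ℕ) : Prop :=
  Fintype.card V = n ∧
  (∀ v, (nbhd G v).card = d) ∧
  (∀ v w, G.Adj v w → (nbhd G v ∩ nbhd G w).card = l) ∧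
  (∀ v w, v ≠ w → ¬ G.Adj v w → (nbhd G v ∩ nbhd G w).card = m) ∧
  G ≠ ⊤ ∧ G ≠ ⊥

namespace LSaux

open Matrix
set_option linter.unusedSectionVars false

variable {V : Type*} [Fintype V]

noncomputable def adjm (G : SimpleGraph V) : Matrix V V ℝ :=
  Matrix.of fun i j => if G.Adj i j then 1 else 0

def Jm (V : Type*) [Fintype V] : Matrix V V ℝ := Matrix.of fun _ _ => 1

lemma Jm_apply (i j : V) : Jm V i j = 1 := rfl

lemma Jm_transpose : (Jm V)ᵀ = Jm V := rfl

lemma adjm_transpose (G : SimpleGraph V) : (adjm G)ᵀ = adjm G := by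
  ext i j
  simp only [Matrix.transpose_apply, adjm, Matrix.of_apply, G.adj_comm]

lemma psd_of_sq {N : Matrix V V ℝ} (hsymm : Nᵀ = N) {c : ℝ} (hc : 0 < c)
    (hsq : N * N = c • N) : N.PosSemidef := by
  refine Matrix.posSemidef_iff_dotProduct_mulVec.mpr ⟨?_, ?_⟩
  · ext i j
    simp only [Matrix.conjTranspose_apply, star_trivial]
    exact congrFun (congrFun hsymm i) j
  · intro x
    have e : (c • N) *ᵥ x = N *ᵥ (N *ᵥ x) := by rw [← hsq, ← Matrix.mulVec_mulVec]
    have key : star x ⬝ᵥ N *ᵥ x = (1/c) * ((N *ᵥ x) ⬝ᵥ (N *ᵥ x)) := by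
      calc star x ⬝ᵥ N *ᵥ x = (1/c) * (x ⬝ᵥ (c • N) *ᵥ x) := by
            rw [Matrix.smul_mulVec, dotProduct_smul, star_trivial, smul_eq_mul]
            field_simp
        _ = (1/c) * (x ⬝ᵥ N *ᵥ (N *ᵥ x)) := by rw [e]
        _ = (1/c) * ((N *ᵥ x) ⬝ᵥ (N *ᵥ x)) := by
            rw [Matrix.dotProduct_mulVec, ← Matrix.mulVec_transpose, hsymm]
    rw [key]
    have : (0:ℝ) ≤ (N *ᵥ x) ⬝ᵥ (N *ᵥ x) :=
      Finset.sum_nonneg fun i _ => mul_self_nonneg _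
    positivity

lemma psd_J : (Jm V).PosSemidef := by
  refine Matrix.posSemidef_iff_dotProduct_mulVec.mpr ⟨?_, ?_⟩
  · ext i j; simp [Matrix.conjTranspose_apply, Jm]
  · intro x
    have : star x ⬝ᵥ (Jm V) *ᵥ x = (∑ i, x i) * (∑ i, x i) := by
      simp [dotProduct, Matrix.mulVec, Jm, Finset.sum_mul, mul_comm]
    rw [this]
    exact mul_self_nonneg _

lemma psd_smul {B : Matrix V V ℝ} (hB : B.PosSemidef) {c : ℝ} (hc : 0 ≤ c) :
    (c • B).PosSemidef := by
  refine Matrix.posSemidef_iff_dotProduct_mulVec.mpr ⟨?_, ?_⟩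
  · ext i j
    simp only [Matrix.conjTranspose_apply, Matrix.smul_apply, star_trivial, smul_eq_mul]
    have := congrFun (congrFun hB.1 i) j
    simp only [Matrix.conjTranspose_apply, star_trivial] at this
    rw [this]
  · intro x
    rw [Matrix.smul_mulVec, dotProduct_smul, smul_eq_mul]
    exact mul_nonneg hc (hB.dotProduct_mulVec_nonneg x)

lemma trace_conjTranspose_mul_self_nonneg (X : Matrix V V ℝ) :
    0 ≤ (Xᴴ * X).trace := by
  rw [Matrix.trace]
  refine Finset.sum_nonneg fun j _ => ?_
  rw [Matrix.diag_apply, Matrix.mul_apply]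
  exact Finset.sum_nonneg fun i _ => by
    simp only [Matrix.conjTranspose_apply, star_trivial]; exact mul_self_nonneg _

lemma inner_nonneg {B C : Matrix V V ℝ} (hB : B.PosSemidef) (hC : C.PosSemidef) :
    0 ≤ ∑ i, ∑ j, B i j * C i j := by
  have hCsymm : ∀ i j, C j i = C i j := fun i j => by
    have := congrFun (congrFun hC.1 i) j
    simpa only [Matrix.conjTranspose_apply, star_trivial] using this
  have e1 : ∑ i, ∑ j, B i j * C i j = (B * C).trace := by
    rw [Matrix.trace]
    refine Finset.sum_congr rfl fun i _ => ?_
    rw [Matrix.diag_apply, Matrix.mul_apply]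
    exact Finset.sum_congr rfl fun j _ => by rw [hCsymm]
  rw [e1]
  obtain ⟨L, hL⟩ := (by open scoped MatrixOrder in exact CStarAlgebra.nonneg_iff_eq_star_mul_self.mp hB.nonneg : ∃ L : Matrix V V ℝ, B = Lᴴ * L)
  obtain ⟨M, hM⟩ := (by open scoped MatrixOrder in exact CStarAlgebra.nonneg_iff_eq_star_mul_self.mp hC.nonneg : ∃ M : Matrix V V ℝ, C = Mᴴ * M)
  have e2 : B * C = Lᴴ * (L * (Mᴴ * M)) := by rw [hL, hM, Matrix.mul_assoc]
  rw [e2, Matrix.trace_mul_comm]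
  have e3 : L * (Mᴴ * M) * Lᴴ = (M * Lᴴ)ᴴ * (M * Lᴴ) := by
    rw [Matrix.conjTranspose_mul, Matrix.conjTranspose_conjTranspose]
    noncomm_ring
  rw [e3]
  exact trace_conjTranspose_mul_self_nonneg _
noncomputable def S (G : SimpleGraph V) : Set ℝ :=
  { x : ℝ | ∃ B : Matrix V V ℝ, B.PosSemidef ∧ B.trace = 1 ∧
    (∀ i j, G.Adj i j → B i j = 0) ∧ x = ∑ i, ∑ j, B i j }


lemma ub_lemma (G : SimpleGraph V) {a b : ℝ} (ha : 0 < a) (hb : 0 < b)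
    (hAJ : adjm G * Jm V = (a*(b-1)) • Jm V)
    (hJA : Jm V * adjm G = (a*(b-1)) • Jm V)
    (hJJ : Jm V * Jm V = (b^2 : ℝ) • Jm V)
    (hA2 : adjm G * adjm G
      = (a*(b-a)) • (1 : Matrix V V ℝ) + (b-2*a) • adjm G + (a*(a-1)) • Jm V) :
    ∀ x ∈ S G, x ≤ b := by
  rintro x ⟨B, hB, htr, hz, rfl⟩
  set A := adjm G with hA
  set P : Matrix V V ℝ := b • (1 : Matrix V V ℝ) - Jm V + (b/a) • A with hP
  have hPsymm : Pᵀ = P := by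
    rw [hP, transpose_add, transpose_sub, transpose_smul, transpose_smul,
      transpose_one, Jm_transpose, hA, adjm_transpose]
  have hPsq : P * P = (b^2/a) • P := by
    rw [hP]
    simp only [mul_add, add_mul, mul_sub, sub_mul, smul_mul_assoc, mul_smul_comm,
      mul_one, one_mul, hA2, hAJ, hJA, hJJ]
    match_scalars <;> field_simp <;> ring
  have hPpsd : P.PosSemidef :=
    psd_of_sq hPsymm (show (0:ℝ) < b^2/a by positivity) hPsq
  have hinner := inner_nonneg hB hPpsd
  have hBA : ∀ i j, B i j * A i j = 0 := by
    intro i j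
    by_cases hadj : G.Adj i j
    · rw [hz i j hadj, zero_mul]
    · rw [hA]; simp [adjm, hadj]
  have h1 : ∀ i, ∑ j, B i j * (1 : Matrix V V ℝ) i j = B i i := by
    intro i
    rw [Finset.sum_eq_single i]
    · simp
    · intro j _ hj; simp [Matrix.one_apply, Ne.symm hj]
    · simp
  have expand : ∑ i, ∑ j, B i j * P i j = b * B.trace - ∑ i, ∑ j, B i j := by
    have e : ∀ i j, B i j * P i j
        = b * (B i j * (1 : Matrix V V ℝ) i j) - B i j + (b/a) * (B i j * A i j) := by
      intro i j
      rw [hP]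
      simp only [Matrix.add_apply, Matrix.sub_apply, Matrix.smul_apply, smul_eq_mul,
        Jm, Matrix.of_apply]
      ring
    simp only [e, hBA, mul_zero, add_zero]
    rw [Matrix.trace]
    simp only [Finset.sum_sub_distrib, ← Finset.mul_sum, h1]
    rw [Finset.mul_sum]
    simp [Matrix.diag_apply, Finset.mul_sum]
  rw [expand, htr] at hinner
  linarith

lemma mem_lemma (G : SimpleGraph V) {a b : ℝ} (ha : 0 < a) (hb : 0 < b)
    (hcard : (Fintype.card V : ℝ) = b^2)
    (hAJ : adjm G * Jm V = (a*(b-1)) • Jm V)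
    (hJA : Jm V * adjm G = (a*(b-1)) • Jm V)
    (hJJ : Jm V * Jm V = (b^2 : ℝ) • Jm V)
    (hA2 : adjm G * adjm G
      = (a*(b-a)) • (1 : Matrix V V ℝ) + (b-2*a) • adjm G + (a*(a-1)) • Jm V) :
    b ∈ S Gᶜ := by
  set A := adjm G with hA
  refine ⟨(1/(a*b^2)) • (A + a • (1 : Matrix V V ℝ)), ?_, ?_, ?_, ?_⟩
  · -- PSD
    set N : Matrix V V ℝ := A + a • (1 : Matrix V V ℝ) - (a/b) • Jm V with hN
    have hNsymm : Nᵀ = N := by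
      rw [hN, transpose_sub, transpose_add, transpose_smul, transpose_smul,
        transpose_one, Jm_transpose, hA, adjm_transpose]
    have hNsq : N * N = b • N := by
      rw [hN]
      simp only [mul_add, add_mul, mul_sub, sub_mul, smul_mul_assoc, mul_smul_comm,
        mul_one, one_mul, hA2, hAJ, hJA, hJJ]
      match_scalars <;> field_simp <;> ring
    have hNpsd : N.PosSemidef := psd_of_sq hNsymm hb hNsq
    have hdecomp : A + a • (1 : Matrix V V ℝ) = N + (a/b) • Jm V := by
      rw [hN]; abel
    rw [hdecomp]
    exact psd_smul (hNpsd.add (psd_smul psd_J (by positivity))) (by positivity)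
  · -- trace
    have htrA : A.trace = 0 := by
      rw [Matrix.trace]
      refine Finset.sum_eq_zero fun i _ => ?_
      simp [Matrix.diag_apply, hA, adjm]
    rw [Matrix.trace_smul, Matrix.trace_add, htrA, Matrix.trace_smul, Matrix.trace_one,
      hcard]
    simp only [smul_eq_mul, zero_add]
    field_simp
  · -- zero on compl edges
    intro i j hadj
    rw [SimpleGraph.compl_adj] at hadj
    simp [hA, adjm, Matrix.one_apply, hadj.1, hadj.2]
  · -- value
    have row : ∀ i, ∑ j, A i j = a*(b-1) := by
      intro i
      have := congrFun (congrFun hAJ i) i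
      simp only [Matrix.mul_apply, Jm, Matrix.of_apply, Matrix.smul_apply, mul_one,
        smul_eq_mul] at this
      exact this
    have h1 : ∀ i, ∑ j, (1 : Matrix V V ℝ) i j = 1 := by
      intro i
      rw [Finset.sum_eq_single i]
      · simp
      · intro j _ hj; simp [Matrix.one_apply, Ne.symm hj]
      · simp
    have : ∑ i, ∑ j, ((1/(a*b^2)) • (A + a • (1 : Matrix V V ℝ))) i j
        = (1/(a*b^2)) * ((Fintype.card V : ℝ) * (a*(b-1)) + a * (Fintype.card V : ℝ)) := by
      simp only [Matrix.smul_apply, Matrix.add_apply, smul_eq_mul, ← Finset.mul_sum,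
        Finset.sum_add_distrib, row, h1, Finset.sum_const, Finset.card_univ,
        nsmul_eq_mul]
      ring
    rw [this, hcard]
    field_simp
    ring

lemma adjm_compl (G : SimpleGraph V) : adjm Gᶜ = Jm V - 1 - adjm G := by
  ext i j
  simp only [adjm, Jm, Matrix.of_apply, Matrix.sub_apply, Matrix.one_apply,
    SimpleGraph.compl_adj]
  by_cases h1 : i = j
  · subst h1; simp
  · by_cases h2 : G.Adj i j <;> simp [h1, h2]

lemma compl_AJ (G : SimpleGraph V) {a b : ℝ}
    (hAJ : adjm G * Jm V = (a*(b-1)) • Jm V)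
    (hJJ : Jm V * Jm V = (b^2 : ℝ) • Jm V) :
    adjm Gᶜ * Jm V = ((b+1-a)*(b-1)) • Jm V := by
  rw [adjm_compl]
  simp only [sub_mul, one_mul, hAJ, hJJ]
  match_scalars; ring

lemma compl_JA (G : SimpleGraph V) {a b : ℝ}
    (hJA : Jm V * adjm G = (a*(b-1)) • Jm V)
    (hJJ : Jm V * Jm V = (b^2 : ℝ) • Jm V) :
    Jm V * adjm Gᶜ = ((b+1-a)*(b-1)) • Jm V := by
  rw [adjm_compl]
  simp only [mul_sub, mul_one, hJA, hJJ]
  match_scalars; ring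

lemma compl_A2 (G : SimpleGraph V) {a b : ℝ}
    (hAJ : adjm G * Jm V = (a*(b-1)) • Jm V)
    (hJA : Jm V * adjm G = (a*(b-1)) • Jm V)
    (hJJ : Jm V * Jm V = (b^2 : ℝ) • Jm V)
    (hA2 : adjm G * adjm G
      = (a*(b-a)) • (1 : Matrix V V ℝ) + (b-2*a) • adjm G + (a*(a-1)) • Jm V) :
    adjm Gᶜ * adjm Gᶜ
      = ((b+1-a)*(b-(b+1-a))) • (1 : Matrix V V ℝ) + (b-2*(b+1-a)) • adjm Gᶜ
        + ((b+1-a)*((b+1-a)-1)) • Jm V := by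
  rw [adjm_compl]
  simp only [sub_mul, mul_sub, one_mul, mul_one, smul_sub, hAJ, hJA, hJJ, hA2]
  match_scalars <;> ring

-- derivation of hypotheses from IsSRG-style data
lemma srg_hyps (G : SimpleGraph V) {m n : ℕ} (hm : 2 ≤ m) (hmn : m < n)
    (hc : Fintype.card V = n ^ 2)
    (hdeg : ∀ v, (nbhd G v).card = m * (n - 1))
    (hl : ∀ v w, G.Adj v w → (nbhd G v ∩ nbhd G w).card = m ^ 2 + n - 3 * m)
    (hmu : ∀ v w, v ≠ w → ¬ G.Adj v w → (nbhd G v ∩ nbhd G w).card = m * (m - 1)) :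
    ((Fintype.card V : ℝ) = (n:ℝ)^2) ∧
    (adjm G * Jm V = (((m:ℝ))*((n:ℝ)-1)) • Jm V) ∧
    (Jm V * adjm G = (((m:ℝ))*((n:ℝ)-1)) • Jm V) ∧
    (Jm V * Jm V = (((n:ℝ))^2 : ℝ) • Jm V) ∧
    (adjm G * adjm G
      = (((m:ℝ))*((n:ℝ)-(m:ℝ))) • (1 : Matrix V V ℝ) + ((n:ℝ)-2*(m:ℝ)) • adjm G
        + (((m:ℝ))*((m:ℝ)-1)) • Jm V) := by
  have h1n : 1 ≤ n := by omega
  have hdegR : ∀ v, ∑ k, adjm G v k = (m:ℝ) * ((n:ℝ)-1) := by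
    intro v
    have : ∑ k, adjm G v k = ((nbhd G v).card : ℝ) := by
      simp [adjm, nbhd, Finset.sum_boole]
    rw [this, hdeg v]
    push_cast [Nat.cast_sub h1n]
    ring
  have hcR : (Fintype.card V : ℝ) = (n:ℝ)^2 := by exact_mod_cast congrArg Nat.cast hc
  have hJJ : Jm V * Jm V = (((n:ℝ))^2 : ℝ) • Jm V := by
    ext i j
    simp [Jm, Matrix.mul_apply, Finset.sum_const, Finset.card_univ, hcR]
  have hAJ : adjm G * Jm V = (((m:ℝ))*((n:ℝ)-1)) • Jm V := by
    ext i j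
    simp only [Matrix.mul_apply, Jm, Matrix.of_apply, mul_one, Matrix.smul_apply,
      smul_eq_mul]
    exact hdegR i
  have hJA : Jm V * adjm G = (((m:ℝ))*((n:ℝ)-1)) • Jm V := by
    ext i j
    simp only [Matrix.mul_apply, Jm, Matrix.of_apply, one_mul, Matrix.smul_apply,
      smul_eq_mul, mul_one]
    have : ∑ k, adjm G k j = ∑ k, adjm G j k := by
      refine Finset.sum_congr rfl fun k _ => ?_
      simp [adjm, G.adj_comm k j]
    rw [this, hdegR j]
  have hinter : ∀ i j, ∑ k, adjm G i k * adjm G k j = ((nbhd G i ∩ nbhd G j).card : ℝ) := by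
    intro i j
    have e : ∀ k, adjm G i k * adjm G k j
        = if k ∈ nbhd G i ∩ nbhd G j then (1:ℝ) else 0 := by
      intro k
      simp only [adjm, Matrix.of_apply, nbhd, Finset.mem_inter, Finset.mem_filter,
        Finset.mem_univ, true_and]
      by_cases h1 : G.Adj i k <;> by_cases h2 : G.Adj k j <;>
        simp [G.adj_comm j k, h1, h2]
    simp only [e]
    rw [Finset.sum_boole]
    rw [Finset.filter_univ_mem]
  have hA2 : adjm G * adjm G
      = (((m:ℝ))*((n:ℝ)-(m:ℝ))) • (1 : Matrix V V ℝ) + ((n:ℝ)-2*(m:ℝ)) • adjm G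
        + (((m:ℝ))*((m:ℝ)-1)) • Jm V := by
    have h3m : 3 * m ≤ m ^ 2 + n := by nlinarith
    ext i j
    rw [Matrix.mul_apply, hinter i j]
    simp only [Matrix.add_apply, Matrix.smul_apply, Matrix.one_apply, Jm, adjm,
      Matrix.of_apply, smul_eq_mul]
    by_cases hij : i = j
    · subst hij
      rw [Finset.inter_self, hdeg i]
      push_cast [Nat.cast_sub h1n]
      simp [SimpleGraph.irrefl]
      ring
    · by_cases hadj : G.Adj i j
      · rw [hl i j hadj]
        have : ((m ^ 2 + n - 3 * m : ℕ) : ℝ) = (m:ℝ)^2 + (n:ℝ) - 3*(m:ℝ) := by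
          push_cast [Nat.cast_sub h3m]; ring
        rw [this]
        simp [hij, hadj]
        ring
      · rw [hmu i j hij hadj]
        have : ((m * (m - 1) : ℕ) : ℝ) = (m:ℝ) * ((m:ℝ) - 1) := by
          push_cast [Nat.cast_sub (by omega : 1 ≤ m)]; ring
        rw [this]
        simp [hij, hadj]
  exact ⟨hcR, hAJ, hJA, hJJ, hA2⟩

lemma lovasz_eq (G : SimpleGraph V) : lovaszTheta G = sSup (S G) := rfl

end LSaux

theorem stmt3 {V : Type*} [Fintype V] (G : SimpleGraph V) (m n : ℕ)
    (hm : 2 ≤ m) (hmn : m < n)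
    (h : IsSRG G (n ^ 2) (m * (n - 1)) (m ^ 2 + n - 3 * m) (m * (m - 1))) :
    lovaszTheta G = (n : ℝ) ∧ lovaszTheta Gᶜ = (n : ℝ) := by
  classical
  open LSaux in
  obtain ⟨hc, hdeg, hl, hmu, -, -⟩ := h
  have ha : (0:ℝ) < (m:ℝ) := by exact_mod_cast (by omega : 0 < m)
  have hb : (0:ℝ) < (n:ℝ) := by exact_mod_cast (by omega : 0 < n)
  have hmnR : (m:ℝ) < (n:ℝ) := by exact_mod_cast hmn
  have ha' : (0:ℝ) < (n:ℝ)+1-(m:ℝ) := by linarith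
  obtain ⟨hcR, hAJ, hJA, hJJ, hA2⟩ := LSaux.srg_hyps G hm hmn hc hdeg hl hmu
  have hAJ' := LSaux.compl_AJ G hAJ hJJ
  have hJA' := LSaux.compl_JA G hJA hJJ
  have hA2' := LSaux.compl_A2 G hAJ hJA hJJ hA2
  have hubG := LSaux.ub_lemma G ha hb hAJ hJA hJJ hA2
  have hubGc := LSaux.ub_lemma Gᶜ ha' hb hAJ' hJA' hJJ hA2'
  have hmemGc := LSaux.mem_lemma G ha hb hcR hAJ hJA hJJ hA2
  have hmemG : (n:ℝ) ∈ LSaux.S G := by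
    have := LSaux.mem_lemma Gᶜ ha' hb hcR hAJ' hJA' hJJ hA2'
    rwa [compl_compl] at this
  constructor
  · rw [LSaux.lovasz_eq]
    exact le_antisymm (csSup_le ⟨_, hmemG⟩ hubG)
      (le_csSup ⟨(n:ℝ), fun x hx => hubG x hx⟩ hmemG)
  · rw [LSaux.lovasz_eq]
    exact le_antisymm (csSup_le ⟨_, hmemGc⟩ hubGc)
      (le_csSup ⟨(n:ℝ), fun x hx => hubGc x hx⟩ hmemGc)
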